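/- arXiv:1511.06893 — 2 statements merged into one kernel-verified Lean document; each statement's English description precedes it below -/
import Mathlib

section
/- A subset S ⊆ GL(d,ℝ) is m-irreducible if and only if it is (d−m)-irreducible, for 1 ≤ m < d. -/
set_option maxHeartbeats 1000000
set_option synthInstance.maxHeartbeats 1000000

open ExteriorAlgebra

/-- The endomorphism of the exterior algebra induced by a matrix. -/
noncomputable def extMap (d : ℕ) (M : Matrix (Fin d) (Fin d) ℝ) :
    ExteriorAlgebra ℝ (Fin d → ℝ) →ₗ[ℝ] ExteriorAlgebra ℝ (Fin d → ℝ) :=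
  (ExteriorAlgebra.map (Matrix.toLin' M)).toLinearMap

/-- `S ⊆ GL(d,ℝ)` is `m`-irreducible: no proper nonzero subspace `W` of the `m`-th
exterior power is invariant under `Λ^m M` for all `M ∈ S`. -/
def IsIrreducible' (d m : ℕ) (S : Set (GL (Fin d) ℝ)) : Prop :=
  ¬ ∃ W : Submodule ℝ (ExteriorAlgebra ℝ (Fin d → ℝ)),
      W ≤ ⋀[ℝ]^m (Fin d → ℝ) ∧ W ≠ ⊥ ∧ W ≠ ⋀[ℝ]^m (Fin d → ℝ) ∧
      ∀ M ∈ S, W.map (extMap d (↑M)) = W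

namespace ExtDual

variable (d : ℕ)

noncomputable abbrev eb : Module.Basis (Fin d) ℝ (Fin d → ℝ) := Pi.basisFun ℝ (Fin d)

/-- Basis wedges of degree `n`. -/
noncomputable def eps (n : ℕ) (s : {s : Finset (Fin d) // s.card = n}) :
    ExteriorAlgebra ℝ (Fin d → ℝ) :=
  ιMulti_family ℝ n (eb d) s

lemma eps_mem (n : ℕ) (s : {s : Finset (Fin d) // s.card = n}) :
    eps d n s ∈ ⋀[ℝ]^n (Fin d → ℝ) :=
  ιMulti_range ℝ n (Set.mem_range_self _)

lemma ιMulti_basis_mem_span (n : ℕ) (r : Fin n → Fin d) :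
    ιMulti ℝ n (fun i => eb d (r i)) ∈ Submodule.span ℝ (Set.range (eps d n)) := by
  by_cases hr : Function.Injective r
  · set s : Finset (Fin d) := Finset.univ.image r with hs_def
    have hs : s.card = n := by
      rw [hs_def, Finset.card_image_of_injective _ hr, Finset.card_univ, Fintype.card_fin]
    have hmem : ∀ i, r i ∈ s := fun i => Finset.mem_image_of_mem r (Finset.mem_univ i)
    set k := s.orderIsoOfFin hs with hk
    let σ' : Fin n → Fin n := fun i => k.symm ⟨r i, hmem i⟩
    have hinj : Function.Injective σ' := by
      intro a b h
      apply hr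
      have h2 : (⟨r a, hmem a⟩ : {x // x ∈ s}) = ⟨r b, hmem b⟩ := k.symm.injective h
      exact congrArg Subtype.val h2
    let σ : Equiv.Perm (Fin n) := Equiv.ofBijective σ'
      ((Finite.injective_iff_bijective).mp hinj)
    have key : (fun i => eb d (r i)) = (fun i => eb d ((k i : Fin d))) ∘ σ := by
      funext i
      show eb d (r i) = eb d (k (σ' i) : Fin d)
      rw [show ((k (σ' i) : Fin d)) = r i from
        congrArg Subtype.val (k.apply_symm_apply ⟨r i, hmem i⟩)]
    rw [key, AlternatingMap.map_perm]
    refine zsmul_mem (Submodule.subset_span ?_) _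
    exact ⟨⟨s, hs⟩, rfl⟩
  · rw [Function.not_injective_iff] at hr
    obtain ⟨a, b, hab, hne⟩ := hr
    rw [AlternatingMap.map_eq_zero_of_eq _ _ (by rw [hab]) hne]
    exact Submodule.zero_mem _

lemma exteriorPower_le_span (n : ℕ) :
    ⋀[ℝ]^n (Fin d → ℝ) ≤ Submodule.span ℝ (Set.range (eps d n)) := by
  rw [← ιMulti_span_fixedDegree]
  refine Submodule.span_le.2 ?_
  rintro _ ⟨v, rfl⟩
  have hv : (ιMulti ℝ n v : ExteriorAlgebra ℝ (Fin d → ℝ)) =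
      ιMulti ℝ n (fun i => ∑ j, v i j • eb d j) := by
    congr 1
    funext i
    rw [show ∑ j, v i j • eb d j = v i from ?_]
    simp only [eb, Pi.basisFun_apply]
    simp_rw [show ∀ j : Fin d, v i j • (Pi.single j (1:ℝ) : Fin d → ℝ)
        = (Pi.single j (v i j) : Fin d → ℝ) by
      intro j; rw [← Pi.single_smul, smul_eq_mul, mul_one]]
    exact Finset.univ_sum_single (v i)
  rw [hv]
  rw [show (ιMulti ℝ n (fun i => ∑ j, v i j • eb d j) : ExteriorAlgebra ℝ (Fin d → ℝ)) =
      ∑ r : Fin n → Fin d, (ιMulti ℝ n) (fun i => v i (r i) • eb d (r i)) from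
    (ιMulti ℝ n).toMultilinearMap.map_sum (fun i j => v i j • eb d j)]
  refine Submodule.sum_mem _ fun r _ => ?_
  rw [show ((ιMulti ℝ n) (fun i => v i (r i) • eb d (r i)) : ExteriorAlgebra ℝ (Fin d → ℝ)) =
      (∏ i, v i (r i)) • (ιMulti ℝ n) (fun i => eb d (r i)) from
    (ιMulti ℝ n).toMultilinearMap.map_smul_univ _ _]
  exact Submodule.smul_mem _ _ (ιMulti_basis_mem_span d n r)

lemma exteriorPower_eq_span (n : ℕ) :
    ⋀[ℝ]^n (Fin d → ℝ) = Submodule.span ℝ (Set.range (eps d n)) := by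
  refine le_antisymm (exteriorPower_le_span d n) (Submodule.span_le.2 ?_)
  rintro _ ⟨s, rfl⟩
  exact eps_mem d n s

instance instFinite (n : ℕ) : Module.Finite ℝ ↥(⋀[ℝ]^n (Fin d → ℝ)) := by
  rw [Module.Finite.iff_fg, exteriorPower_eq_span]
  exact Submodule.fg_span (Set.finite_range _)


noncomputable def detf : ∀ i, (Fin d → ℝ) [⋀^Fin i]→ₗ[ℝ] ℝ :=
  Function.update (fun _ => 0) d (eb d).det
noncomputable def lam : ExteriorAlgebra ℝ (Fin d → ℝ) →ₗ[ℝ] ℝ :=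
  liftAlternating (detf d)
lemma lam_ιMulti (v : Fin d → (Fin d → ℝ)) :
    lam d (ιMulti ℝ d v) = (eb d).det v := by
  rw [lam, liftAlternating_apply_ιMulti, detf, Function.update_self]
lemma ιMulti_mul (a b : ℕ) (u : Fin a → (Fin d → ℝ)) (w : Fin b → (Fin d → ℝ)) :
    (ιMulti ℝ a u : ExteriorAlgebra ℝ (Fin d → ℝ)) * ιMulti ℝ b w =
      ιMulti ℝ (a + b) (Fin.append u w) := by
  rw [ιMulti_apply, ιMulti_apply, ιMulti_apply, ← List.prod_append, ← List.ofFn_fin_append]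
  congr 2
  funext i
  refine Fin.addCases (fun i => ?_) (fun i => ?_) i <;>
    simp [Fin.append_left, Fin.append_right]

/-- The sorted enumeration of a finset. -/
def sfn {n : ℕ} (s : Finset (Fin d)) (hs : s.card = n) : Fin n → Fin d :=
  fun i => (s.orderIsoOfFin hs i : Fin d)

lemma sfn_mem {n : ℕ} (s : Finset (Fin d)) (hs : s.card = n) (i : Fin n) :
    sfn d s hs i ∈ s := (s.orderIsoOfFin hs i).2

lemma sfn_inj {n : ℕ} (s : Finset (Fin d)) (hs : s.card = n) :
    Function.Injective (sfn d s hs) := fun i j h =>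
  (s.orderIsoOfFin hs).injective (Subtype.ext h)

lemma lam_eps_mul (a b : ℕ) (hab : a + b = d) (s t : Finset (Fin d))
    (hs : s.card = a) (ht : t.card = b) :
    lam d (eps d a ⟨s, hs⟩ * eps d b ⟨t, ht⟩) =
      (eb d).det (fun i => eb d (Fin.append (sfn d s hs) (sfn d t ht) (Fin.cast hab.symm i))) := by
  subst hab
  have h1 : eps (a+b) a ⟨s, hs⟩ = ιMulti ℝ a (fun i => eb (a+b) (sfn (a+b) s hs i)) := rfl
  have h2 : eps (a+b) b ⟨t, ht⟩ = ιMulti ℝ b (fun i => eb (a+b) (sfn (a+b) t ht i)) := rfl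
  rw [h1, h2, ιMulti_mul, lam_ιMulti]
  congr 1
  funext i
  refine Fin.addCases (fun i => ?_) (fun i => ?_) i <;>
    simp [Fin.append_left, Fin.append_right]

lemma fin_split (a b : ℕ) :
    ∀ j : Fin (a + b), (∃ p : Fin a, j = Fin.castAdd b p) ∨ (∃ p : Fin b, j = Fin.natAdd a p) := by
  intro j
  by_cases hj : (j : ℕ) < a
  · exact Or.inl ⟨⟨j, hj⟩, Fin.ext rfl⟩
  · exact Or.inr ⟨⟨(j : ℕ) - a, by omega⟩, Fin.ext (by simp; omega)⟩

lemma lam_eps_mul_eq_zero (a b : ℕ) (hab : a + b = d) (s t : Finset (Fin d))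
    (hs : s.card = a) (ht : t.card = b) (h : ¬ Disjoint s t) :
    lam d (eps d a ⟨s, hs⟩ * eps d b ⟨t, ht⟩) = 0 := by
  rw [lam_eps_mul d a b hab s t hs ht]
  obtain ⟨x, hxs, hxt⟩ := Finset.not_disjoint_iff.mp h
  set i : Fin a := (s.orderIsoOfFin hs).symm ⟨x, hxs⟩ with hi
  set j : Fin b := (t.orderIsoOfFin ht).symm ⟨x, hxt⟩ with hj
  have hgi : sfn d s hs i = x := congrArg Subtype.val ((s.orderIsoOfFin hs).apply_symm_apply _)
  have hgj : sfn d t ht j = x := congrArg Subtype.val ((t.orderIsoOfFin ht).apply_symm_apply _)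
  refine AlternatingMap.map_eq_zero_of_eq _ _
    (i := Fin.cast hab (Fin.castAdd b i)) (j := Fin.cast hab (Fin.natAdd a j)) ?_ ?_
  · rw [show Fin.cast hab.symm (Fin.cast hab (Fin.castAdd b i)) = Fin.castAdd b i from rfl,
      show Fin.cast hab.symm (Fin.cast hab (Fin.natAdd a j)) = Fin.natAdd a j from rfl,
      Fin.append_left, Fin.append_right, hgi, hgj]
  · intro hcon
    have := congrArg Fin.val hcon
    simp only [Fin.coe_cast, Fin.coe_castAdd, Fin.coe_natAdd] at this
    omega

lemma lam_eps_mul_ne_zero (a b : ℕ) (hab : a + b = d) (s t : Finset (Fin d))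
    (hs : s.card = a) (ht : t.card = b) (h : Disjoint s t) :
    lam d (eps d a ⟨s, hs⟩ * eps d b ⟨t, ht⟩) ≠ 0 := by
  rw [lam_eps_mul d a b hab s t hs ht]
  set g : Fin d → Fin d := fun i => Fin.append (sfn d s hs) (sfn d t ht) (Fin.cast hab.symm i)
    with hgdef
  have hginj : Function.Injective g := by
    intro i1 i2 hE
    have hE' : Fin.append (sfn d s hs) (sfn d t ht) (Fin.cast hab.symm i1) =
        Fin.append (sfn d s hs) (sfn d t ht) (Fin.cast hab.symm i2) := hE
    suffices hsuff : Fin.cast hab.symm i1 = Fin.cast hab.symm i2 by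
      simpa [Fin.ext_iff] using hsuff
    rcases fin_split a b (Fin.cast hab.symm i1) with ⟨p1, hp1⟩ | ⟨p1, hp1⟩ <;>
      rcases fin_split a b (Fin.cast hab.symm i2) with ⟨p2, hp2⟩ | ⟨p2, hp2⟩ <;>
      rw [hp1, hp2] at hE' ⊢
    · rw [Fin.append_left, Fin.append_left] at hE'
      rw [sfn_inj d s hs hE']
    · rw [Fin.append_left, Fin.append_right] at hE'
      exact absurd (hE' ▸ sfn_mem d s hs p1) (Finset.disjoint_left.mp h · (sfn_mem d t ht p2))
    · rw [Fin.append_right, Fin.append_left] at hE'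
      exact absurd (hE' ▸ sfn_mem d t ht p1) fun hmem =>
        (Finset.disjoint_left.mp h (sfn_mem d s hs p2)) hmem
    · rw [Fin.append_right, Fin.append_right] at hE'
      rw [sfn_inj d t ht hE']
  let σ : Equiv.Perm (Fin d) := Equiv.ofBijective g ((Finite.injective_iff_bijective).mp hginj)
  have hfn : (fun i => eb d (g i)) = ⇑(eb d) ∘ ⇑σ := rfl
  rw [show (fun i => eb d (Fin.append (sfn d s hs) (sfn d t ht) (Fin.cast hab.symm i)))
      = ⇑(eb d) ∘ ⇑σ from rfl]
  rw [AlternatingMap.map_perm, Module.Basis.det_self]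
  rcases Int.units_eq_one_or (Equiv.Perm.sign σ) with hσ | hσ <;> simp [hσ]


lemma compl_card {a b : ℕ} (hab : a + b = d) {s : Finset (Fin d)} (hs : s.card = a) :
    sᶜ.card = b := by
  rw [Finset.card_compl, hs, Fintype.card_fin]; omega

lemma eq_compl_of_disjoint {a b : ℕ} (hab : a + b = d) {s t : Finset (Fin d)}
    (hs : s.card = a) (ht : t.card = b) (h : Disjoint s t) : s = tᶜ := by
  have hsub : s ⊆ tᶜ := fun x hx => Finset.mem_compl.mpr (Finset.disjoint_left.mp h hx)
  refine Finset.eq_of_subset_of_card_le hsub ?_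
  rw [hs, compl_card d (show b + a = d by omega) ht]

lemma left_nondeg (a b : ℕ) (hab : a + b = d) (x : ExteriorAlgebra ℝ (Fin d → ℝ))
    (hx : x ∈ ⋀[ℝ]^a (Fin d → ℝ))
    (h : ∀ y ∈ ⋀[ℝ]^b (Fin d → ℝ), x * y = 0) : x = 0 := by
  have hx' := exteriorPower_le_span d a hx
  rw [Submodule.mem_span_range_iff_exists_fun] at hx'
  obtain ⟨c, hc⟩ := hx'
  suffices hall : ∀ s, c s = 0 by
    rw [← hc]
    simp [hall]
  intro s
  have ht : (↑s : Finset (Fin d))ᶜ.card = b := compl_card d hab s.2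
  have h0 : x * eps d b ⟨(↑s)ᶜ, ht⟩ = 0 := h _ (eps_mem d b _)
  have h1 : lam d (x * eps d b ⟨(↑s)ᶜ, ht⟩) = 0 := by rw [h0, map_zero]
  rw [← hc, Finset.sum_mul] at h1
  simp_rw [smul_mul_assoc] at h1
  rw [map_sum] at h1
  simp_rw [map_smul, smul_eq_mul] at h1
  rw [Finset.sum_eq_single s] at h1
  · have hne : lam d (eps d a s * eps d b ⟨(↑s)ᶜ, ht⟩) ≠ 0 := by
      exact lam_eps_mul_ne_zero d a b hab ↑s (↑s)ᶜ s.2 ht disjoint_compl_right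
    exact (mul_eq_zero.mp h1).resolve_right hne
  · intro s' _ hs'
    have hz : lam d (eps d a s' * eps d b ⟨(↑s)ᶜ, ht⟩) = 0 := by
      refine lam_eps_mul_eq_zero d a b hab ↑s' (↑s)ᶜ s'.2 ht ?_
      intro hdisj
      exact hs' (Subtype.ext (by
        rw [eq_compl_of_disjoint d hab s'.2 ht hdisj, compl_compl]))
    rw [hz, mul_zero]
  · intro hs
    exact absurd (Finset.mem_univ s) hs

lemma right_nondeg (a b : ℕ) (hab : a + b = d) (x : ExteriorAlgebra ℝ (Fin d → ℝ))
    (hx : x ∈ ⋀[ℝ]^b (Fin d → ℝ))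
    (h : ∀ y ∈ ⋀[ℝ]^a (Fin d → ℝ), y * x = 0) : x = 0 := by
  have hx' := exteriorPower_le_span d b hx
  rw [Submodule.mem_span_range_iff_exists_fun] at hx'
  obtain ⟨c, hc⟩ := hx'
  suffices hall : ∀ s, c s = 0 by
    rw [← hc]
    simp [hall]
  intro s
  have ht : (↑s : Finset (Fin d))ᶜ.card = a := compl_card d (show b + a = d by omega) s.2
  have h0 : eps d a ⟨(↑s)ᶜ, ht⟩ * x = 0 := h _ (eps_mem d a _)
  have h1 : lam d (eps d a ⟨(↑s)ᶜ, ht⟩ * x) = 0 := by rw [h0, map_zero]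
  rw [← hc, Finset.mul_sum] at h1
  simp_rw [mul_smul_comm] at h1
  rw [map_sum] at h1
  simp_rw [map_smul, smul_eq_mul] at h1
  rw [Finset.sum_eq_single s] at h1
  · have hne : lam d (eps d a ⟨(↑s)ᶜ, ht⟩ * eps d b s) ≠ 0 := by
      exact lam_eps_mul_ne_zero d a b hab (↑s)ᶜ ↑s ht s.2 disjoint_compl_left
    exact (mul_eq_zero.mp h1).resolve_right hne
  · intro s' _ hs'
    have hz : lam d (eps d a ⟨(↑s)ᶜ, ht⟩ * eps d b s') = 0 := by
      refine lam_eps_mul_eq_zero d a b hab (↑s)ᶜ ↑s' ht s'.2 ?_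
      intro hdisj
      refine hs' (Subtype.ext ?_)
      have := eq_compl_of_disjoint d (show b + a = d by omega) s'.2 ht hdisj.symm
      rw [this, compl_compl]
    rw [hz, mul_zero]
  · intro hs
    exact absurd (Finset.mem_univ s) hs

lemma eps_empty : eps d 0 ⟨∅, rfl⟩ = 1 := ιMulti_zero_apply _

lemma lam_eps_ne_zero (s : {s : Finset (Fin d) // s.card = d}) : lam d (eps d d s) ≠ 0 := by
  have h := lam_eps_mul_ne_zero d d 0 rfl ↑s ∅ s.2 rfl (Finset.disjoint_empty_right _)
  rwa [eps_empty, mul_one] at h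

lemma top_eq_zero (x : ExteriorAlgebra ℝ (Fin d → ℝ)) (hx : x ∈ ⋀[ℝ]^d (Fin d → ℝ))
    (h : lam d x = 0) : x = 0 := by
  have hx' := exteriorPower_le_span d d hx
  rw [Submodule.mem_span_range_iff_exists_fun] at hx'
  obtain ⟨c, hc⟩ := hx'
  haveI : Subsingleton {s : Finset (Fin d) // s.card = d} := ⟨fun s t => Subtype.ext (by
    rw [Finset.eq_univ_of_card (↑s : Finset (Fin d)) (by rw [s.2, Fintype.card_fin]),
      Finset.eq_univ_of_card (↑t : Finset (Fin d)) (by rw [t.2, Fintype.card_fin])])⟩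
  set u0 : {s : Finset (Fin d) // s.card = d} :=
    ⟨Finset.univ, by rw [Finset.card_univ, Fintype.card_fin]⟩ with hu0
  rw [Fintype.sum_subsingleton _ u0] at hc
  rw [← hc] at h ⊢
  rw [map_smul, smul_eq_mul] at h
  rcases mul_eq_zero.mp h with h' | h'
  · rw [h', zero_smul]
  · exact absurd h' (lam_eps_ne_zero d u0)

lemma mul_mem_top {a b : ℕ} (hab : a + b = d) {x y : ExteriorAlgebra ℝ (Fin d → ℝ)}
    (hx : x ∈ ⋀[ℝ]^a (Fin d → ℝ)) (hy : y ∈ ⋀[ℝ]^b (Fin d → ℝ)) :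
    x * y ∈ ⋀[ℝ]^d (Fin d → ℝ) := by
  have h := SetLike.mul_mem_graded hx hy
  rwa [hab] at h

lemma mul_eq_zero_of_lam {a b : ℕ} (hab : a + b = d) {x y : ExteriorAlgebra ℝ (Fin d → ℝ)}
    (hx : x ∈ ⋀[ℝ]^a (Fin d → ℝ)) (hy : y ∈ ⋀[ℝ]^b (Fin d → ℝ))
    (h : lam d (x * y) = 0) : x * y = 0 :=
  top_eq_zero d _ (mul_mem_top d hab hx hy) h

/-- The wedge pairing between exterior powers. -/
noncomputable def B (a b : ℕ) :
    ↥(⋀[ℝ]^a (Fin d → ℝ)) →ₗ[ℝ] ↥(⋀[ℝ]^b (Fin d → ℝ)) →ₗ[ℝ] ℝ :=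
  LinearMap.mk₂ ℝ (fun w v => lam d ((w : ExteriorAlgebra ℝ (Fin d → ℝ)) * ↑v))
    (fun w w' v => by simp [add_mul])
    (fun r w v => by simp [smul_mul_assoc])
    (fun w v v' => by simp [mul_add])
    (fun r w v => by simp [mul_smul_comm])

lemma B_inj (a b : ℕ) (hab : a + b = d) : Function.Injective (B d a b) := by
  rw [← LinearMap.ker_eq_bot, Submodule.eq_bot_iff]
  intro w hw
  rw [LinearMap.mem_ker] at hw
  have : (w : ExteriorAlgebra ℝ (Fin d → ℝ)) = 0 := by
    refine left_nondeg d a b hab _ w.2 fun y hy => ?_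
    have h0 : lam d ((w : ExteriorAlgebra ℝ (Fin d → ℝ)) * y) = 0 := by
      have := congrFun (congrArg DFunLike.coe hw) ⟨y, hy⟩
      simpa [B] using this
    exact mul_eq_zero_of_lam d hab w.2 hy h0
  exact Subtype.ext this

lemma finrank_le' (a b : ℕ) (hab : a + b = d) :
    Module.finrank ℝ ↥(⋀[ℝ]^a (Fin d → ℝ)) ≤ Module.finrank ℝ ↥(⋀[ℝ]^b (Fin d → ℝ)) := by
  calc Module.finrank ℝ ↥(⋀[ℝ]^a (Fin d → ℝ))
      ≤ Module.finrank ℝ (Module.Dual ℝ ↥(⋀[ℝ]^b (Fin d → ℝ))) :=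
        LinearMap.finrank_le_finrank_of_injective (B_inj d a b hab)
    _ = Module.finrank ℝ ↥(⋀[ℝ]^b (Fin d → ℝ)) := Subspace.dual_finrank_eq

lemma finrank_eq' (a b : ℕ) (hab : a + b = d) :
    Module.finrank ℝ ↥(⋀[ℝ]^a (Fin d → ℝ)) = Module.finrank ℝ ↥(⋀[ℝ]^b (Fin d → ℝ)) :=
  le_antisymm (finrank_le' d a b hab) (finrank_le' d b a (by omega))

lemma exists_ann (a b : ℕ) (hab : a + b = d) (W : Submodule ℝ (ExteriorAlgebra ℝ (Fin d → ℝ)))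
    (hW : W ≤ ⋀[ℝ]^a (Fin d → ℝ)) (hne : W ≠ ⋀[ℝ]^a (Fin d → ℝ)) :
    ∃ v : ExteriorAlgebra ℝ (Fin d → ℝ),
      v ∈ ⋀[ℝ]^b (Fin d → ℝ) ∧ v ≠ 0 ∧ ∀ w ∈ W, w * v = 0 := by
  set W' : Submodule ℝ ↥(⋀[ℝ]^a (Fin d → ℝ)) := W.comap (⋀[ℝ]^a (Fin d → ℝ)).subtype with hW'
  have hW'ne : W' ≠ ⊤ := by
    intro hcon
    exact hne (le_antisymm hW (by rwa [Submodule.comap_subtype_eq_top] at hcon))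
  set ρ : ↥(⋀[ℝ]^b (Fin d → ℝ)) →ₗ[ℝ] Module.Dual ℝ ↥W' :=
    { toFun := fun v => ((B d a b).flip v) ∘ₗ W'.subtype
      map_add' := fun v v' => by ext w; simp
      map_smul' := fun r v => by ext w; simp } with hρ
  haveI hfdW' : FiniteDimensional ℝ ↥W' := inferInstance
  haveI hfdW'd : Module.Finite ℝ (Module.Dual ℝ ↥W') :=
    Subspace.instModuleDualFiniteDimensional (K := ℝ) (V := ↥W')
  have hρnotinj : ¬ Function.Injective ρ := by
    intro hinj
    have h1 : Module.finrank ℝ ↥(⋀[ℝ]^b (Fin d → ℝ)) ≤ Module.finrank ℝ ↥W' := by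
      calc Module.finrank ℝ ↥(⋀[ℝ]^b (Fin d → ℝ))
          ≤ Module.finrank ℝ (Module.Dual ℝ ↥W') :=
            LinearMap.finrank_le_finrank_of_injective hinj
        _ = Module.finrank ℝ ↥W' := Subspace.dual_finrank_eq (K := ℝ) (V := ↥W')
    have h2 : Module.finrank ℝ ↥W' < Module.finrank ℝ ↥(⋀[ℝ]^a (Fin d → ℝ)) :=
      Submodule.finrank_lt hW'ne
    have h3 := finrank_eq' d a b hab
    omega
  have : ∃ v : ↥(⋀[ℝ]^b (Fin d → ℝ)), v ≠ 0 ∧ ρ v = 0 := by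
    by_contra hcon
    push_neg at hcon
    apply hρnotinj
    rw [← LinearMap.ker_eq_bot, Submodule.eq_bot_iff]
    intro v hv
    by_contra hv0
    exact hcon v hv0 (LinearMap.mem_ker.mp hv)
  obtain ⟨v, hv0, hvρ⟩ := this
  refine ⟨↑v, v.2, by simpa using hv0, fun w hw => ?_⟩
  have hwmem : (⟨⟨w, hW hw⟩, hw⟩ : ↥W') = (⟨⟨w, hW hw⟩, hw⟩ : ↥W') := rfl
  have h0 : lam d (w * ↑v) = 0 := by
    have := congrFun (congrArg DFunLike.coe hvρ) (⟨⟨w, hW hw⟩, hw⟩ : ↥W')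
    simpa [hρ, B] using this
  exact mul_eq_zero_of_lam d hab (hW hw) v.2 h0

lemma extMap_mul (A : Matrix (Fin d) (Fin d) ℝ) (x y : ExteriorAlgebra ℝ (Fin d → ℝ)) :
    extMap d A (x * y) = extMap d A x * extMap d A y :=
  map_mul (ExteriorAlgebra.map (Matrix.toLin' A)) x y

lemma extMap_comp (A C : Matrix (Fin d) (Fin d) ℝ) :
    extMap d A ∘ₗ extMap d C = extMap d (A * C) := by
  unfold extMap
  rw [← AlgHom.comp_toLinearMap, ExteriorAlgebra.map_comp_map, Matrix.toLin'_mul]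

lemma extMap_one : extMap d 1 = LinearMap.id := by
  unfold extMap
  rw [Matrix.toLin'_one, ExteriorAlgebra.map_id]
  rfl

lemma pow_mono {p q : Submodule ℝ (ExteriorAlgebra ℝ (Fin d → ℝ))} (h : p ≤ q) (k : ℕ) :
    p ^ k ≤ q ^ k := by
  induction k with
  | zero => simp
  | succ n ih => rw [pow_succ, pow_succ]; exact mul_le_mul' ih h

lemma extMap_maps (A : Matrix (Fin d) (Fin d) ℝ) (k : ℕ) :
    (⋀[ℝ]^k (Fin d → ℝ)).map (extMap d A) ≤ ⋀[ℝ]^k (Fin d → ℝ) := by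
  show Submodule.map (ExteriorAlgebra.map (Matrix.toLin' A)).toLinearMap
      (LinearMap.range (ι ℝ) ^ k) ≤ LinearMap.range (ι ℝ) ^ k
  rw [Submodule.map_pow]
  refine pow_mono d ?_ k
  rw [ι_range_map_map]
  calc Submodule.map (ι ℝ) (LinearMap.range (Matrix.toLin' A))
      ≤ Submodule.map (ι ℝ) ⊤ := Submodule.map_mono le_top
    _ = LinearMap.range (ι ℝ) := Submodule.map_top _

lemma transfer (m : ℕ) (hm1 : 1 ≤ m) (hmd : m < d) (S : Set (GL (Fin d) ℝ)) :
    (∃ W : Submodule ℝ (ExteriorAlgebra ℝ (Fin d → ℝ)),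
      W ≤ ⋀[ℝ]^m (Fin d → ℝ) ∧ W ≠ ⊥ ∧ W ≠ ⋀[ℝ]^m (Fin d → ℝ) ∧
      ∀ M ∈ S, W.map (extMap d (↑M)) = W) →
    (∃ W : Submodule ℝ (ExteriorAlgebra ℝ (Fin d → ℝ)),
      W ≤ ⋀[ℝ]^(d-m) (Fin d → ℝ) ∧ W ≠ ⊥ ∧ W ≠ ⋀[ℝ]^(d-m) (Fin d → ℝ) ∧
      ∀ M ∈ S, W.map (extMap d (↑M)) = W) := by
  rintro ⟨W, hWle, hWbot, hWne, hWinv⟩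
  set b := d - m with hb
  have hab : m + b = d := by omega
  set W' : Submodule ℝ (ExteriorAlgebra ℝ (Fin d → ℝ)) :=
    (⋀[ℝ]^b (Fin d → ℝ)) ⊓ (⨅ w ∈ W, LinearMap.ker (LinearMap.mulLeft ℝ w)) with hW'
  have hmemW' : ∀ v, v ∈ W' ↔ (v ∈ ⋀[ℝ]^b (Fin d → ℝ) ∧ ∀ w ∈ W, w * v = 0) := by
    intro v
    simp [hW', Submodule.mem_inf, Submodule.mem_iInf, LinearMap.mem_ker,
      LinearMap.mulLeft_apply]
  refine ⟨W', inf_le_left, ?_, ?_, ?_⟩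
  · obtain ⟨v, hv1, hv2, hv3⟩ := exists_ann d m b hab W hWle hWne
    rw [Submodule.ne_bot_iff]
    exact ⟨v, (hmemW' v).mpr ⟨hv1, hv3⟩, hv2⟩
  · intro hcon
    obtain ⟨w, hwW, hw0⟩ := Submodule.ne_bot_iff W |>.mp hWbot
    refine hw0 (left_nondeg d m b hab w (hWle hwW) fun y hy => ?_)
    have : y ∈ W' := hcon ▸ hy
    exact ((hmemW' y).mp this).2 w hwW
  · intro M hM
    set f := extMap d (↑M : Matrix (Fin d) (Fin d) ℝ) with hf
    set g := extMap d (↑(M⁻¹) : Matrix (Fin d) (Fin d) ℝ) with hg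
    have hgf : g ∘ₗ f = LinearMap.id := by
      rw [hg, hf, extMap_comp, Units.inv_mul, extMap_one]
    have hfg : f ∘ₗ g = LinearMap.id := by
      rw [hg, hf, extMap_comp, Units.mul_inv, extMap_one]
    have hWf : W.map f = W := hWinv M hM
    have hWg : W.map g = W := by
      conv_lhs => rw [← hWf]
      rw [← Submodule.map_comp, hgf, Submodule.map_id]
    have happgf : ∀ x, g (f x) = x := fun x => congrArg (fun h => h x)
      (congrArg DFunLike.coe hgf)
    have happfg : ∀ x, f (g x) = x := fun x => congrArg (fun h => h x)
      (congrArg DFunLike.coe hfg)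
    apply le_antisymm
    · rintro _ ⟨v, hv, rfl⟩
      replace hv : v ∈ W' := hv
      rw [hmemW' v] at hv
      rw [hmemW' (f v)]
      obtain ⟨hv1, hv2⟩ := hv
      refine ⟨extMap_maps d _ b ⟨v, hv1, rfl⟩, fun w hw => ?_⟩
      have hgw : g w ∈ W := hWg ▸ Submodule.mem_map_of_mem hw
      calc w * f v = f (g w) * f v := by rw [happfg]
        _ = f (g w * v) := (extMap_mul d _ _ _).symm
        _ = f 0 := by rw [hv2 (g w) hgw]
        _ = 0 := map_zero _
    · intro v hv
      rw [hmemW' v] at hv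
      obtain ⟨hv1, hv2⟩ := hv
      refine ⟨g v, ?_, happfg v⟩
      show g v ∈ W'
      rw [hmemW' (g v)]
      refine ⟨extMap_maps d _ b ⟨v, hv1, rfl⟩, fun w hw => ?_⟩
      have hfw : f w ∈ W := hWf ▸ Submodule.mem_map_of_mem hw
      calc w * g v = g (f w) * g v := by rw [happgf]
        _ = g (f w * v) := (extMap_mul d _ _ _).symm
        _ = g 0 := by rw [hv2 (f w) hfw]
        _ = 0 := map_zero _

end ExtDual

theorem stmt_2 (d m : ℕ) (hm1 : 1 ≤ m) (hmd : m < d) (S : Set (GL (Fin d) ℝ)) :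
    IsIrreducible' d m S ↔ IsIrreducible' d (d - m) S := by
  have hm1' : 1 ≤ d - m := by omega
  have hmd' : d - m < d := by omega
  unfold IsIrreducible'
  apply not_congr
  constructor
  · exact ExtDual.transfer d m hm1 hmd S
  · intro h
    have h2 := ExtDual.transfer d (d - m) hm1' hmd' S h
    rwa [Nat.sub_sub_self hmd.le] at h2
end

section
/- Let Λ be a finite set, let {A_λ}_{λ∈Λ} ⊂ GL(d,ℝ) with ‖A_λ‖ < 1 for each λ, let v = (v_λ)_{λ∈Λ} ∈ ℝ^{d|Λ|}, and let φ_λ(x) = A_λ x + v_λ. Let K be the attractor of the IFS {φ_λ} and assume the strong separation condition: the sets φ_λ(K), λ ∈ Λ, are pairwise disjoint. Then the d-dimensional Lebesgue measure of K is zero and ∑_{λ∈Λ} |det A_λ| < 1. -/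
open Matrix MeasureTheory Metric Set
set_option maxHeartbeats 1000000

/-- If the attractor `K` of a self-affine IFS of invertible contractions satisfies the
strong separation condition, then `K` has Lebesgue measure zero and
`∑ |det A_λ| < 1`. -/
theorem stmt_6 (d : ℕ) (ι : Type*) [Fintype ι] (hι : 1 < Fintype.card ι)
    (A : ι → Matrix (Fin d) (Fin d) ℝ) (hinv : ∀ l, IsUnit (A l))
    (hnorm : ∀ l, ‖toEuclideanCLM (𝕜 := ℝ) (A l)‖ < 1)
    (v : ι → EuclideanSpace ℝ (Fin d))
    (φ : ι → EuclideanSpace ℝ (Fin d) → EuclideanSpace ℝ (Fin d))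
    (hφ : ∀ l x, φ l x = toEuclideanCLM (𝕜 := ℝ) (A l) x + v l)
    (K : Set (EuclideanSpace ℝ (Fin d)))
    (hKc : IsCompact K) (hKne : K.Nonempty)
    (hKattr : K = ⋃ l, φ l '' K)
    (hssc : Pairwise fun l₁ l₂ => Disjoint (φ l₁ '' K) (φ l₂ '' K)) :
    volume K = 0 ∧ ∑ l, |Matrix.det (A l)| < 1 := by
  classical
  haveI : Nonempty ι := Fintype.card_pos_iff.mp (by omega)
  set f : ι → (EuclideanSpace ℝ (Fin d) →L[ℝ] EuclideanSpace ℝ (Fin d)) :=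
    fun l => toEuclideanCLM (𝕜 := ℝ) (A l) with hf
  obtain ⟨i₀, j₀, hij₀⟩ := Fintype.exists_pair_of_one_lt_card hι
  obtain ⟨x₀, hx₀⟩ := hKne
  have h1 : φ i₀ x₀ ≠ φ j₀ x₀ :=
    (hssc hij₀).ne_of_mem (mem_image_of_mem _ hx₀) (mem_image_of_mem _ hx₀)
  haveI hnt : Nontrivial (EuclideanSpace ℝ (Fin d)) := ⟨_, _, h1⟩
  -- the uniform contraction ratio
  set r : ℝ := Finset.univ.sup' Finset.univ_nonempty (fun l => ‖f l‖) with hr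
  have hr_lt : r < 1 := (Finset.sup'_lt_iff Finset.univ_nonempty).mpr (fun l _ => hnorm l)
  have hr_le : ∀ l, ‖f l‖ ≤ r := by
    intro l
    rw [hr]
    exact Finset.le_sup' (fun l => ‖f l‖) (Finset.mem_univ l)
  have hr_pos : 0 < r := by
    refine lt_of_lt_of_le ?_ (hr_le i₀)
    rw [norm_pos_iff]
    exact ((hinv i₀).map (toEuclideanCLM (𝕜 := ℝ))).ne_zero
  -- continuity and compactness of the images
  have hφc : ∀ l, Continuous (φ l) := by
    intro l
    have : φ l = fun x => f l x + v l := funext (hφ l)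
    rw [this]
    exact ((f l).continuous).add continuous_const
  have hKcomp : ∀ l, IsCompact (φ l '' K) := fun l => hKc.image (hφc l)
  -- disjoint thickenings
  have key : ∀ p : ι × ι, p.1 ≠ p.2 → ∃ δ > 0,
      Disjoint (thickening δ (φ p.1 '' K)) (thickening δ (φ p.2 '' K)) :=
    fun p hp => (hssc hp).exists_thickenings (hKcomp p.1) (hKcomp p.2).isClosed
  set g : ι × ι → ℝ := fun p => if h : p.1 ≠ p.2 then (key p h).choose else 1 with hg
  have hg_pos : ∀ p, 0 < g p := by
    intro p
    by_cases h : p.1 ≠ p.2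
    · simp only [hg, dif_pos h]; exact (key p h).choose_spec.1
    · rw [not_ne_iff] at h
      simp [hg, h]
  have hg_disj : ∀ p : ι × ι, (h : p.1 ≠ p.2) →
      Disjoint (thickening (g p) (φ p.1 '' K)) (thickening (g p) (φ p.2 '' K)) := by
    intro p h
    simp only [hg, dif_pos h]
    exact (key p h).choose_spec.2
  set δ : ℝ := Finset.univ.inf' Finset.univ_nonempty g with hδ
  have hδ_pos : 0 < δ := by
    rw [hδ, Finset.lt_inf'_iff]
    exact fun p _ => hg_pos p
  have hδ_le : ∀ p, δ ≤ g p := fun p => Finset.inf'_le _ (Finset.mem_univ p)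
  set ε : ℝ := δ / r with hε
  have hε_pos : 0 < ε := div_pos hδ_pos hr_pos
  have hrε : r * ε = δ := by rw [hε]; field_simp
  have hrε_lt : r * ε < ε := by
    rw [hrε, hε]
    rw [lt_div_iff₀ hr_pos]
    nlinarith
  -- volume of affine images
  have hdet : ∀ l, LinearMap.det ((f l : _ →L[ℝ] _) :
      EuclideanSpace ℝ (Fin d) →ₗ[ℝ] EuclideanSpace ℝ (Fin d)) = (A l).det := by
    intro l
    rw [hf, coe_toEuclideanCLM_eq_toEuclideanLin, toEuclideanLin_eq_toLin, LinearMap.det_toLin]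
  have hvol : ∀ l (S : Set (EuclideanSpace ℝ (Fin d))),
      volume (φ l '' S) = ENNReal.ofReal |(A l).det| * volume S := by
    intro l S
    have h7 := Measure.addHaar_image_continuousLinearMap volume (f l) S
    rw [hdet l] at h7
    calc volume (φ l '' S) = volume ((fun y => y + v l) '' (f l '' S)) := by
          rw [← image_comp]
          congr 1
          ext x
          simp [hφ l, hf]
      _ = volume (f l '' S) := by
          rw [Set.image_add_right]
          simp [measure_preimage_add_right]
      _ = ENNReal.ofReal |(A l).det| * volume S := h7
  -- image of thickening shrinks
  have himg : ∀ l, φ l '' (thickening ε K) ⊆ thickening (r * ε) (φ l '' K) := by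
    rintro l y ⟨x, hx, rfl⟩
    obtain ⟨k, hk, hdk⟩ := mem_thickening_iff.mp hx
    refine mem_thickening_iff.mpr ⟨φ l k, mem_image_of_mem _ hk, ?_⟩
    rw [hφ l x, hφ l k, dist_eq_norm]
    have h2 : (f l x + v l) - (f l k + v l) = f l (x - k) := by
      rw [map_sub]; abel
    rw [h2]
    calc ‖f l (x - k)‖ ≤ ‖f l‖ * ‖x - k‖ := (f l).le_opNorm _
      _ ≤ r * ‖x - k‖ := mul_le_mul_of_nonneg_right (hr_le l) (norm_nonneg _)
      _ < r * ε := by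
          apply mul_lt_mul_of_pos_left _ hr_pos
          rw [← dist_eq_norm]; exact hdk
  -- pairwise disjointness at radius r*ε
  have hdisj : Pairwise fun i j : ι =>
      Disjoint (thickening (r * ε) (φ i '' K)) (thickening (r * ε) (φ j '' K)) := by
    intro i j hij
    exact Disjoint.mono (thickening_mono (hrε ▸ hδ_le (i, j)) _)
      (thickening_mono (hrε ▸ hδ_le (i, j)) _) (hg_disj (i, j) hij)
  -- φ l '' K ⊆ K
  have hsub : ∀ l, φ l '' K ⊆ K := by
    intro l
    conv_rhs => rw [hKattr]
    exact subset_iUnion (fun l => φ l '' K) l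
  -- the band U
  obtain ⟨R, hR⟩ := hKc.isBounded.subset_closedBall x₀
  have hR0 : 0 ≤ R := by
    have := hR hx₀
    simpa using this
  set u : EuclideanSpace ℝ (Fin d) := φ i₀ x₀ - φ j₀ x₀ with hu
  have hu0 : u ≠ 0 := sub_ne_zero.mpr h1
  have hu_pos : 0 < ‖u‖ := norm_pos_iff.mpr hu0
  set S : ℝ := (R + ε) / ‖u‖ with hS
  have hS0 : 0 ≤ S := div_nonneg (by linarith) hu_pos.le
  set G : ℝ → ℝ := fun s => infDist (x₀ + s • u) K with hG
  have hGc : Continuous G :=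
    (continuous_infDist_pt K).comp (continuous_const.add (continuous_id.smul continuous_const))
  have hG0 : G 0 = 0 := by
    simp only [hG, zero_smul, add_zero]
    exact infDist_zero_of_mem hx₀
  have hGS : ε ≤ G S := by
    by_contra h
    push_neg at h
    obtain ⟨k, hk, hdk⟩ := (infDist_lt_iff ⟨x₀, hx₀⟩).mp h
    have h3 : dist (x₀ + S • u) x₀ ≤ dist (x₀ + S • u) k + dist k x₀ := dist_triangle _ _ _
    have h4 : dist (x₀ + S • u) x₀ = R + ε := by
      rw [dist_eq_norm, add_sub_cancel_left, norm_smul, Real.norm_of_nonneg hS0, hS]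
      field_simp
    have h5 : dist k x₀ ≤ R := by simpa [dist_comm] using hR hk
    linarith
  have hmem : (r * ε + ε) / 2 ∈ Icc (G 0) (G S) := by
    constructor
    · rw [hG0]; positivity
    · refine le_trans ?_ hGS; linarith
  obtain ⟨s₀, -, hs₀⟩ := intermediate_value_Icc hS0 hGc.continuousOn hmem
  set y₀ : EuclideanSpace ℝ (Fin d) := x₀ + s₀ • u with hy₀
  have hy₀d : infDist y₀ K = (r * ε + ε) / 2 := hs₀
  set U : Set (EuclideanSpace ℝ (Fin d)) := (fun y => infDist y K) ⁻¹' (Ioo (r * ε) ε) with hU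
  have hU_open : IsOpen U := isOpen_Ioo.preimage (continuous_infDist_pt K)
  have hy₀U : y₀ ∈ U := by
    rw [hU, mem_preimage, hy₀d]
    constructor <;> [linarith; linarith]
  have hU_pos : 0 < volume U := hU_open.measure_pos _ ⟨y₀, hy₀U⟩
  have hU_sub : U ⊆ thickening ε K := by
    intro y hy
    exact (mem_thickening_iff_infDist_lt ⟨x₀, hx₀⟩).mpr hy.2
  have hU_disj : Disjoint (thickening (r * ε) K) U := by
    rw [disjoint_left]
    intro y hy hyU
    exact absurd ((mem_thickening_iff_infDist_lt ⟨x₀, hx₀⟩).mp hy) (not_lt.mpr hyU.1.le)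
  -- main volume comparison
  set σ : ENNReal := ∑ l, ENNReal.ofReal |(A l).det| with hσ
  set V : ENNReal := volume (thickening ε K) with hV
  set W : ENNReal := volume (thickening (r * ε) K) with hW
  have hV_pos : 0 < V := (isOpen_thickening).measure_pos _
    ⟨x₀, self_subset_thickening hε_pos K hx₀⟩
  have hV_fin : V < ⊤ := (hKc.isBounded.thickening).measure_lt_top
  have step1 : σ * V ≤ W := by
    calc σ * V = ∑ l, volume (φ l '' thickening ε K) := by
          rw [hσ, hV, Finset.sum_mul]
          exact Finset.sum_congr rfl fun l _ => (hvol l _).symm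
      _ ≤ ∑ l, volume (thickening (r * ε) (φ l '' K)) :=
          Finset.sum_le_sum fun l _ => measure_mono (himg l)
      _ = volume (⋃ l, thickening (r * ε) (φ l '' K)) := by
          rw [measure_iUnion hdisj (fun l => isOpen_thickening.measurableSet), tsum_fintype]
      _ ≤ W := measure_mono (iUnion_subset fun l =>
          thickening_subset_of_subset _ (hsub l))
  have step2 : W < V := by
    calc W < W + volume U := ENNReal.lt_add_right (lt_of_le_of_lt (measure_mono
            (thickening_mono hrε_lt.le K)) hV_fin).ne hU_pos.ne'
      _ = volume (thickening (r * ε) K ∪ U) :=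
          (measure_union hU_disj hU_open.measurableSet).symm
      _ ≤ V := measure_mono (union_subset (thickening_mono hrε_lt.le K) hU_sub)
  have hσ_lt : σ < 1 := by
    by_contra h
    push_neg at h
    have : V ≤ σ * V := by
      conv_lhs => rw [← one_mul V]
      exact mul_le_mul_left h V
    exact absurd (lt_of_le_of_lt (this.trans step1) step2) (lt_irrefl V)
  -- conclusion
  have hsum : ∑ l, |Matrix.det (A l)| < 1 := by
    have h6 : ENNReal.ofReal (∑ l, |(A l).det|) = σ := by
      rw [hσ, ENNReal.ofReal_sum_of_nonneg (fun l _ => abs_nonneg _)]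
    have := h6 ▸ hσ_lt
    exact_mod_cast (ENNReal.ofReal_lt_one.mp this)
  refine ⟨?_, hsum⟩
  have hvolK : volume K = σ * volume K := by
    conv_lhs => rw [hKattr]
    rw [measure_iUnion hssc (fun l => (hKcomp l).isClosed.measurableSet), tsum_fintype]
    rw [hσ, Finset.sum_mul]
    exact Finset.sum_congr rfl fun l _ => hvol l K
  by_contra h0
  have hK_pos : 0 < volume K := pos_iff_ne_zero.mpr h0
  have hK_fin : volume K < ⊤ := hKc.measure_lt_top
  have : σ * volume K < 1 * volume K :=
    by rw [mul_comm σ, mul_comm 1]; exact ENNReal.mul_lt_mul_right hK_pos.ne' hK_fin.ne hσ_lt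
  rw [one_mul, ← hvolK] at this
  exact absurd this (lt_irrefl _)
end
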